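/- arXiv:1311.3364 — 3 statements merged into one kernel-verified Lean document; each statement's English description precedes it below -/
import Mathlib

section
/- Let G be a finite group, T a positive integer, and 0 < δ ≤ 1/|G|. Let s(t), t = 0,1,2,..., be vectors of convex weights on G satisfying: for every t, the composite convex weight vector q(t,T) = s(t+T−1) ∗ ⋯ ∗ s(t) satisfies q(t,T)(g) > δ for all g ∈ G. Let p(t) evolve as p(t+1) = s(t) ∗ p(t) from any initial vector of convex weights p(0), and let p̂(g) = 1/|G|. Then p(t) converges to p̂ as t → ∞, with the explicit exponential bound ‖p(t) − p̂‖ ≤ √|G| · (1 − |G|δ)^{⌊t/T⌋} for all t, where ‖·‖ is the Euclidean norm on ℝ^G. -/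
/-- A vector of convex weights on a finite type: nonnegative entries summing to 1. -/
def IsConvexWeights {G : Type*} [Fintype G] (s : G → ℝ) : Prop :=
  (∀ g, 0 ≤ s g) ∧ ∑ g, s g = 1

/-- Group convolution of weight vectors: `(s ∗ p)(g) = ∑ h, s(h) p(h⁻¹ g)`. -/
def groupConv {G : Type*} [Group G] [Fintype G] (s p : G → ℝ) : G → ℝ :=
  fun g => ∑ h : G, s h * p (h⁻¹ * g)

/-- The composite weights describing the evolution from time `t` to `t + T`:
`compWeights s t T = s(t+T−1) ∗ ⋯ ∗ s(t+1) ∗ s(t)` (the empty composite, `T = 0`,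
is the delta distribution at the identity). -/
def compWeights {G : Type*} [Group G] [Fintype G] [DecidableEq G]
    (s : ℕ → G → ℝ) (t : ℕ) : ℕ → G → ℝ
  | 0 => fun g => if g = 1 then 1 else 0
  | T + 1 => groupConv (s (t + T)) (compWeights s t T)

section Aux
variable {G : Type*} [Group G] [Fintype G]

lemma shift_sum (p : G → ℝ) (h : G) : ∑ g, p (h⁻¹ * g) = ∑ g, p g :=
  Equiv.sum_comp (Equiv.mulLeft h⁻¹) p

lemma shift_sum' (p : G → ℝ) (g : G) : ∑ h, p (h⁻¹ * g) = ∑ x, p x :=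
  Equiv.sum_comp ((Equiv.inv G).trans (Equiv.mulRight g)) p

lemma conv_sum (s p : G → ℝ) : ∑ g, groupConv s p g = (∑ h, s h) * (∑ g, p g) := by
  unfold groupConv
  rw [Finset.sum_comm, Finset.sum_mul]
  exact Finset.sum_congr rfl fun h _ => by rw [← Finset.mul_sum, shift_sum]

lemma conv_assoc (a b c : G → ℝ) : groupConv (groupConv a b) c = groupConv a (groupConv b c) := by
  funext g
  unfold groupConv
  simp only [Finset.sum_mul, Finset.mul_sum]
  rw [Finset.sum_comm]
  refine Finset.sum_congr rfl fun k _ => ?_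
  rw [← Equiv.sum_comp (Equiv.mulLeft k) (fun h => a k * b (k⁻¹ * h) * c (h⁻¹ * g))]
  refine Finset.sum_congr rfl fun m _ => ?_
  simp [mul_inv_rev, mul_assoc]

lemma conv_sub_const (s f : G → ℝ) (c : ℝ) (g : G) :
    groupConv s (fun x => f x - c) g = groupConv s f g - c * ∑ h, s h := by
  unfold groupConv
  rw [Finset.mul_sum, ← Finset.sum_sub_distrib]
  exact Finset.sum_congr rfl fun h _ => by ring

lemma conv_delta [DecidableEq G] (p : G → ℝ) :
    groupConv (fun g => if g = 1 then (1:ℝ) else 0) p = p := by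
  funext g
  unfold groupConv
  simp [ite_mul]

lemma conv_sq_le (s e : G → ℝ) (hs : ∀ g, 0 ≤ s g) :
    ∑ g, (groupConv s e g) ^ 2 ≤ (∑ h, s h) ^ 2 * ∑ g, (e g) ^ 2 := by
  have CS : ∀ g : G, (groupConv s e g) ^ 2 ≤ (∑ h, s h) * ∑ h, s h * (e (h⁻¹ * g)) ^ 2 := by
    intro g
    have h1 := Finset.sum_mul_sq_le_sq_mul_sq Finset.univ
      (fun h => Real.sqrt (s h)) (fun h => Real.sqrt (s h) * e (h⁻¹ * g))
    have e1 : ∀ h : G, Real.sqrt (s h) * (Real.sqrt (s h) * e (h⁻¹ * g)) = s h * e (h⁻¹ * g) := by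
      intro h; rw [← mul_assoc, Real.mul_self_sqrt (hs h)]
    have e2 : ∀ h : G, (Real.sqrt (s h)) ^ 2 = s h := fun h => Real.sq_sqrt (hs h)
    have e3 : ∀ h : G, (Real.sqrt (s h) * e (h⁻¹ * g)) ^ 2 = s h * (e (h⁻¹ * g)) ^ 2 := by
      intro h; rw [mul_pow, e2]
    simp only [e1, e2, e3] at h1
    exact h1
  calc ∑ g, (groupConv s e g) ^ 2 ≤ ∑ g, ((∑ h, s h) * ∑ h, s h * (e (h⁻¹ * g)) ^ 2) :=
        Finset.sum_le_sum fun g _ => CS g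
    _ = (∑ h, s h) ^ 2 * ∑ g, (e g) ^ 2 := by
        rw [← Finset.mul_sum, Finset.sum_comm, sq, mul_assoc]
        congr 1
        rw [Finset.sum_mul]
        refine Finset.sum_congr rfl fun h _ => ?_
        rw [← Finset.mul_sum]
        congr 1
        exact shift_sum (fun x => (e x) ^ 2) h

end Aux

theorem exponential_convergence_to_uniform
    {G : Type*} [Group G] [Fintype G] [DecidableEq G]
    (T : ℕ) (hT : 0 < T)
    (δ : ℝ) (hδ0 : 0 < δ) (hδ1 : δ ≤ 1 / (Fintype.card G : ℝ))
    (s : ℕ → G → ℝ) (hs : ∀ t, IsConvexWeights (s t))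
    (hq : ∀ (t : ℕ) (g : G), δ < compWeights s t T g)
    (p : ℕ → G → ℝ) (hp0 : IsConvexWeights (p 0))
    (hstep : ∀ t, p (t + 1) = groupConv (s t) (p t)) :
    (∀ g : G, Filter.Tendsto (fun t => p t g) Filter.atTop
        (nhds (1 / (Fintype.card G : ℝ))))
    ∧ ∀ t : ℕ,
        Real.sqrt (∑ g : G, (p t g - 1 / (Fintype.card G : ℝ)) ^ 2)
          ≤ Real.sqrt (Fintype.card G)
              * (1 - (Fintype.card G : ℝ) * δ) ^ (t / T) := by
  set n : ℝ := (Fintype.card G : ℝ) with hn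
  have hcard : 0 < Fintype.card G := Fintype.card_pos
  have hn0 : 0 < n := by rw [hn]; exact_mod_cast hcard
  set c : ℝ := 1 - n * δ with hc
  have hc0 : 0 ≤ c := by
    have : n * δ ≤ n * (1 / n) := by
      apply mul_le_mul_of_nonneg_left hδ1 hn0.le
    rw [mul_one_div, div_self hn0.ne'] at this
    linarith
  have hc1 : c < 1 := by
    have : 0 < n * δ := mul_pos hn0 hδ0
    simp [hc]; linarith
  -- sum of p t is 1
  have hsum : ∀ t, ∑ g, p t g = 1 := by
    intro t
    induction t with
    | zero => exact hp0.2
    | succ t ih => rw [hstep t, conv_sum, (hs t).2, ih, mul_one]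
  -- sums of compWeights are 1
  have csum : ∀ t T', ∑ g, compWeights s t T' g = 1 := by
    intro t T'
    induction T' with
    | zero => simp [compWeights]
    | succ T' ih => rw [compWeights, conv_sum, (hs (t + T')).2, ih, mul_one]
  -- evolution by composite weights
  have pcomp : ∀ t T', p (t + T') = groupConv (compWeights s t T') (p t) := by
    intro t T'
    induction T' with
    | zero => rw [compWeights, conv_delta]; rfl
    | succ T' ih =>
      have : t + (T' + 1) = (t + T') + 1 := by ring
      rw [this, hstep (t + T'), ih, compWeights, conv_assoc]
  -- the squared distance
  set F : ℕ → ℝ := fun t => ∑ g, (p t g - 1 / n) ^ 2 with hF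
  have esum : ∀ t, ∑ g, (p t g - 1 / n) = 0 := by
    intro t
    rw [Finset.sum_sub_distrib, hsum t, Finset.sum_const, Finset.card_univ, nsmul_eq_mul]
    rw [← hn, mul_one_div, div_self hn0.ne']
    ring
  have step1 : ∀ t, F (t + 1) ≤ F t := by
    intro t
    have he : ∀ g, p (t + 1) g - 1 / n = groupConv (s t) (fun x => p t x - 1 / n) g := by
      intro g
      rw [conv_sub_const, (hs t).2, mul_one, hstep t]
    have := conv_sq_le (s t) (fun x => p t x - 1 / n) (hs t).1
    rw [(hs t).2, one_pow, one_mul] at this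
    calc F (t + 1) = ∑ g, (groupConv (s t) (fun x => p t x - 1 / n) g) ^ 2 := by
          exact Finset.sum_congr rfl fun g _ => by rw [he g]
      _ ≤ ∑ g, (p t g - 1 / n) ^ 2 := this
  have stepT : ∀ t, F (t + T) ≤ c ^ 2 * F t := by
    intro t
    set q : G → ℝ := compWeights s t T with hqdef
    set q' : G → ℝ := fun h => q h - δ with hq'
    have hq'nonneg : ∀ h, 0 ≤ q' h := fun h => sub_nonneg.mpr (hq t h).le
    have hq'sum : ∑ h, q' h = c := by
      rw [hq', Finset.sum_sub_distrib, csum t T, Finset.sum_const, Finset.card_univ,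
        nsmul_eq_mul, ← hn, hc]
    have key : ∀ g, p (t + T) g - 1 / n = groupConv q' (fun x => p t x - 1 / n) g := by
      intro g
      have h1 : p (t + T) g - 1 / n = groupConv q (fun x => p t x - 1 / n) g := by
        rw [conv_sub_const, csum t T, mul_one, pcomp t T]
      have h3 : groupConv q (fun x => p t x - 1 / n) g
          - groupConv q' (fun x => p t x - 1 / n) g = 0 := by
        unfold groupConv
        rw [← Finset.sum_sub_distrib]
        have h4 : ∀ h : G, q h * (p t (h⁻¹ * g) - 1 / n) - q' h * (p t (h⁻¹ * g) - 1 / n)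
            = δ * (p t (h⁻¹ * g) - 1 / n) := by intro h; rw [hq']; ring
        rw [Finset.sum_congr rfl fun h _ => h4 h, ← Finset.mul_sum,
          shift_sum' (fun x => p t x - 1 / n) g, esum t, mul_zero]
      rw [h1]
      linarith
    have hle := conv_sq_le q' (fun x => p t x - 1 / n) hq'nonneg
    rw [hq'sum] at hle
    calc F (t + T) = ∑ g, (groupConv q' (fun x => p t x - 1 / n) g) ^ 2 :=
          Finset.sum_congr rfl fun g _ => by rw [key g]
      _ ≤ c ^ 2 * F t := hle
  -- base bound F 0 ≤ n
  have hF0 : F 0 ≤ n := by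
    have hb : ∀ g : G, (p 0 g - 1 / n) ^ 2 ≤ 1 := by
      intro g
      have h1 : p 0 g ≤ 1 := by
        rw [← hp0.2]
        exact Finset.single_le_sum (fun g _ => hp0.1 g) (Finset.mem_univ g)
      have h2 : (0:ℝ) ≤ 1 / n := by positivity
      have h3 : 1 / n ≤ 1 := by
        rw [div_le_one hn0, hn]
        exact_mod_cast hcard
      have h4 : 0 ≤ p 0 g := hp0.1 g
      nlinarith
    calc F 0 ≤ ∑ _g : G, (1:ℝ) := Finset.sum_le_sum fun g _ => hb g
      _ = n := by rw [Finset.sum_const, Finset.card_univ, nsmul_eq_mul, mul_one]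
  -- geometric decay along multiples of T
  have geo : ∀ k : ℕ, F (T * k) ≤ (c ^ k) ^ 2 * n := by
    intro k
    induction k with
    | zero => simpa using hF0
    | succ k ih =>
      have h1 : T * (k + 1) = T * k + T := by ring
      calc F (T * (k + 1)) = F (T * k + T) := by rw [h1]
        _ ≤ c ^ 2 * F (T * k) := stepT (T * k)
        _ ≤ c ^ 2 * ((c ^ k) ^ 2 * n) :=
            mul_le_mul_of_nonneg_left ih (sq_nonneg c)
        _ = (c ^ (k + 1)) ^ 2 * n := by ring
  have anti : Antitone F := antitone_nat_of_succ_le step1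
  -- the main bound
  have main : ∀ t : ℕ, Real.sqrt (F t) ≤ Real.sqrt n * c ^ (t / T) := by
    intro t
    have h1 : T * (t / T) ≤ t := Nat.mul_div_le t T
    have h2 : F t ≤ (c ^ (t / T)) ^ 2 * n := le_trans (anti h1) (geo (t / T))
    calc Real.sqrt (F t) ≤ Real.sqrt ((c ^ (t / T)) ^ 2 * n) := Real.sqrt_le_sqrt h2
      _ = Real.sqrt n * c ^ (t / T) := by
          rw [Real.sqrt_mul (sq_nonneg _), Real.sqrt_sq (pow_nonneg hc0 _), mul_comm]
  refine ⟨?_, main⟩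
  -- convergence
  intro g
  have hbound : ∀ t : ℕ, ‖p t g - 1 / n‖ ≤ Real.sqrt n * c ^ (t / T) := by
    intro t
    have h1 : (p t g - 1 / n) ^ 2 ≤ F t :=
      Finset.single_le_sum (f := fun g => (p t g - 1 / n) ^ 2)
        (fun g _ => sq_nonneg _) (Finset.mem_univ g)
    have h2 : ‖p t g - 1 / n‖ = Real.sqrt ((p t g - 1 / n) ^ 2) := by
      rw [Real.sqrt_sq_eq_abs, Real.norm_eq_abs]
    rw [h2]
    exact le_trans (Real.sqrt_le_sqrt h1) (main t)
  have hdiv : Filter.Tendsto (fun t : ℕ => t / T) Filter.atTop Filter.atTop := by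
    apply Filter.tendsto_atTop_atTop.mpr
    intro b
    refine ⟨b * T, fun t ht => ?_⟩
    have h := Nat.div_le_div_right (c := T) ht
    rwa [Nat.mul_div_cancel b hT] at h
  have hpow : Filter.Tendsto (fun k : ℕ => c ^ k) Filter.atTop (nhds 0) :=
    tendsto_pow_atTop_nhds_zero_of_lt_one hc0 hc1
  have hrhs : Filter.Tendsto (fun t : ℕ => Real.sqrt n * c ^ (t / T))
      Filter.atTop (nhds 0) := by
    have h := (hpow.comp hdiv).const_mul (Real.sqrt n)
    simpa using h
  have hzero : Filter.Tendsto (fun t => p t g - 1 / n) Filter.atTop (nhds 0) :=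
    squeeze_zero_norm hbound hrhs
  have hfin := hzero.add_const (1 / n)
  simpa using hfin
end

section
/- Let G be a finite group and ρ a linear representation of G on a finite-dimensional real normed vector space X. Let T be a positive integer and 0 < δ ≤ 1/|G|. Let s(t), t = 0,1,2,..., be vectors of convex weights on G such that for every t the composite convex weight vector q(t,T) = s(t+T−1) ∗ ⋯ ∗ s(t) satisfies q(t,T)(g) > δ for all g ∈ G. Define x(t+1) = ∑_{g∈G} s_g(t)·ρ(g)(x(t)) from any initial x(0) ∈ X, and let F̄ = (1/|G|) ∑_{g∈G} ρ(g). Then lim_{t→∞} x(t) = F̄(x(0)), and there exists a constant C ≥ 0 (depending on x(0) and ρ) such that ‖x(t) − F̄(x(0))‖ ≤ C·(1 − |G|δ)^{⌊t/T⌋} for all t. -/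
set_option linter.unusedSectionVars false
section Aux
variable {G : Type*} [Group G] [Fintype G] [DecidableEq G]
variable {X : Type*} [NormedAddCommGroup X] [NormedSpace ℝ X]

noncomputable def nu (ρ : Representation ℝ G X) (v : X) : ℝ := ∑ g : G, ‖ρ g v‖

variable (ρ : Representation ℝ G X)

lemma nu_nonneg (v : X) : 0 ≤ nu ρ v :=
  Finset.sum_nonneg fun _ _ => norm_nonneg _

lemma norm_le_nu (v : X) : ‖v‖ ≤ nu ρ v := by
  have h : ‖ρ (1 : G) v‖ ≤ nu ρ v :=
    Finset.single_le_sum (f := fun g : G => ‖ρ g v‖)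
      (fun _ _ => norm_nonneg _) (Finset.mem_univ 1)
  simpa using h

lemma rho_mul_apply (g h : G) (v : X) : ρ (g * h) v = ρ g (ρ h v) := by
  rw [map_mul]; rfl

lemma nu_rho (h : G) (v : X) : nu ρ (ρ h v) = nu ρ v := by
  unfold nu
  refine Fintype.sum_equiv (Equiv.mulRight h) _ _ fun g => ?_
  simp [Equiv.coe_mulRight, rho_mul_apply]

lemma nu_sum_smul_le (c : G → ℝ) (hc : ∀ g, 0 ≤ c g) (w : G → X) :
    nu ρ (∑ g : G, c g • w g) ≤ ∑ g : G, c g * nu ρ (w g) := by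
  unfold nu
  calc ∑ h : G, ‖ρ h (∑ g : G, c g • w g)‖
      = ∑ h : G, ‖∑ g : G, c g • ρ h (w g)‖ := by
        simp [map_sum, map_smul]
    _ ≤ ∑ h : G, ∑ g : G, c g * ‖ρ h (w g)‖ := by
        refine Finset.sum_le_sum fun h _ => ?_
        refine (norm_sum_le _ _).trans (Finset.sum_le_sum fun g _ => ?_)
        rw [norm_smul, Real.norm_eq_abs, abs_of_nonneg (hc g)]
    _ = ∑ g : G, c g * ∑ h : G, ‖ρ h (w g)‖ := by
        rw [Finset.sum_comm]; simp [Finset.mul_sum]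

lemma compWeights_convex (s : ℕ → G → ℝ) (hs : ∀ t, IsConvexWeights (s t))
    (t : ℕ) : ∀ k, IsConvexWeights (compWeights s t k)
  | 0 => ⟨fun g => by by_cases h : g = 1 <;> simp [compWeights, h], by
      simp [compWeights]⟩
  | (k + 1) => by
      obtain ⟨h0, h1⟩ := compWeights_convex s hs t k
      constructor
      · intro g
        exact Finset.sum_nonneg fun h _ =>
          mul_nonneg ((hs (t + k)).1 h) (h0 _)
      · show ∑ g : G, ∑ h : G, s (t + k) h * compWeights s t k (h⁻¹ * g) = 1
        rw [Finset.sum_comm]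
        have : ∀ h : G, ∑ g : G, s (t + k) h * compWeights s t k (h⁻¹ * g)
            = s (t + k) h := by
          intro h
          rw [← Finset.mul_sum]
          have : ∑ g : G, compWeights s t k (h⁻¹ * g) = 1 := by
            rw [← h1]
            exact Equiv.sum_comp (Equiv.mulLeft h⁻¹) (compWeights s t k)
          rw [this, mul_one]
        simp only [this, (hs (t + k)).2]

/-- Key contraction: if `∑ g, ρ g v = 0` and `q` is a convex weight vector with
`q g > δ` everywhere, then applying the `q`-weighted average contracts `nu`. -/
lemma key_contraction (q : G → ℝ) (hq1 : ∑ g, q g = 1) (δ : ℝ)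
    (hqδ : ∀ g, δ ≤ q g) (v : X) (hv : ∑ g : G, ρ g v = 0) :
    nu ρ (∑ g : G, q g • ρ g v) ≤ (1 - (Fintype.card G : ℝ) * δ) * nu ρ v := by
  have hrw : ∑ g : G, q g • ρ g v = ∑ g : G, (q g - δ) • ρ g v := by
    rw [← sub_eq_zero]
    rw [← Finset.sum_sub_distrib]
    simp only [← sub_smul, sub_sub_cancel]
    rw [← Finset.smul_sum, hv, smul_zero]
  rw [hrw]
  calc nu ρ (∑ g : G, (q g - δ) • ρ g v)
      ≤ ∑ g : G, (q g - δ) * nu ρ (ρ g v) :=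
        nu_sum_smul_le ρ _ (fun g => sub_nonneg.2 (hqδ g)) _
    _ = ∑ g : G, (q g - δ) * nu ρ v := by simp [nu_rho]
    _ = (1 - (Fintype.card G : ℝ) * δ) * nu ρ v := by
        rw [← Finset.sum_mul, Finset.sum_sub_distrib, hq1, Finset.sum_const,
          Finset.card_univ, nsmul_eq_mul]

end Aux
theorem exponential_convergence_to_symmetrization
    {G : Type*} [Group G] [Fintype G] [DecidableEq G]
    {X : Type*} [NormedAddCommGroup X] [NormedSpace ℝ X] [FiniteDimensional ℝ X]
    (ρ : Representation ℝ G X)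
    (T : ℕ) (hT : 0 < T)
    (δ : ℝ) (hδ0 : 0 < δ) (hδ1 : δ ≤ 1 / (Fintype.card G : ℝ))
    (s : ℕ → G → ℝ) (hs : ∀ t, IsConvexWeights (s t))
    (hq : ∀ (t : ℕ) (g : G), δ < compWeights s t T g)
    (x : ℕ → X)
    (hx : ∀ t, x (t + 1) = ∑ g : G, s t g • ρ g (x t)) :
    Filter.Tendsto x Filter.atTop
        (nhds ((Fintype.card G : ℝ)⁻¹ • ∑ g : G, ρ g (x 0)))
    ∧ ∃ C : ℝ, 0 ≤ C ∧ ∀ t : ℕ,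
        ‖x t - (Fintype.card G : ℝ)⁻¹ • ∑ g : G, ρ g (x 0)‖
          ≤ C * (1 - (Fintype.card G : ℝ) * δ) ^ (t / T) := by
  classical
  have hcard : (0 : ℝ) < (Fintype.card G : ℝ) := by
    exact_mod_cast Fintype.card_pos
  set Fb : X := (Fintype.card G : ℝ)⁻¹ • ∑ g : G, ρ g (x 0) with hFb
  set e : ℕ → X := fun t => x t - Fb with he
  set r : ℝ := 1 - (Fintype.card G : ℝ) * δ with hrdef
  have hr0 : 0 ≤ r := by
    have h1 : (Fintype.card G : ℝ) * δ ≤ (Fintype.card G : ℝ) * (1 / (Fintype.card G : ℝ)) :=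
      mul_le_mul_of_nonneg_left hδ1 hcard.le
    have h2 : (Fintype.card G : ℝ) * (1 / (Fintype.card G : ℝ)) = 1 := by
      field_simp
    rw [hrdef]; linarith
  have hr1 : r < 1 := by
    have := mul_pos hcard hδ0
    rw [hrdef]; linarith
  have hFbinv : ∀ g : G, ρ g Fb = Fb := by
    intro g
    rw [hFb, map_smul, map_sum]
    congr 1
    calc ∑ h : G, ρ g (ρ h (x 0)) = ∑ h : G, ρ (g * h) (x 0) := by
          simp [rho_mul_apply]
      _ = ∑ h : G, ρ h (x 0) := Equiv.sum_comp (Equiv.mulLeft g) (fun h => ρ h (x 0))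
  have hsum : ∀ t, ∑ g : G, ρ g (x t) = ∑ g : G, ρ g (x 0) := by
    intro t
    induction t with
    | zero => rfl
    | succ t ih =>
      calc ∑ g : G, ρ g (x (t + 1))
          = ∑ g : G, ∑ h : G, s t h • ρ (g * h) (x t) := by
            refine Finset.sum_congr rfl fun g _ => ?_
            rw [hx t, map_sum]
            exact Finset.sum_congr rfl fun h _ => by rw [map_smul, rho_mul_apply]
        _ = ∑ h : G, s t h • ∑ g : G, ρ (g * h) (x t) := by
            rw [Finset.sum_comm]
            exact Finset.sum_congr rfl fun h _ => by rw [Finset.smul_sum]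
        _ = ∑ h : G, s t h • ∑ g : G, ρ g (x t) := by
            refine Finset.sum_congr rfl fun h _ => ?_
            exact congrArg _ (Equiv.sum_comp (Equiv.mulRight h) (fun g => ρ g (x t)))
        _ = ∑ g : G, ρ g (x 0) := by
            rw [← Finset.sum_smul, (hs t).2, one_smul, ih]
  have he_step : ∀ t, e (t + 1) = ∑ g : G, s t g • ρ g (e t) := by
    intro t
    have key : ∑ g : G, s t g • ρ g (e t)
        = (∑ g : G, s t g • ρ g (x t)) - (∑ g : G, s t g) • Fb := by
      rw [Finset.sum_smul, ← Finset.sum_sub_distrib]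
      refine Finset.sum_congr rfl fun g _ => ?_
      have : e t = x t - Fb := rfl
      rw [this, map_sub, hFbinv, smul_sub]
    have : e (t + 1) = x (t + 1) - Fb := rfl
    rw [this, key, (hs t).2, one_smul, hx t]
  have he_ker : ∀ t, ∑ g : G, ρ g (e t) = 0 := by
    intro t
    have h1 : ∑ g : G, ρ g (e t)
        = (∑ g : G, ρ g (x t)) - (Fintype.card G) • Fb := by
      have : ∀ g : G, ρ g (e t) = ρ g (x t) - Fb := by
        intro g
        have he' : e t = x t - Fb := rfl
        rw [he', map_sub, hFbinv]
      simp only [this, Finset.sum_sub_distrib, Finset.sum_const, Finset.card_univ]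
    rw [h1, hsum t, hFb, ← Nat.cast_smul_eq_nsmul ℝ, smul_smul,
      mul_inv_cancel₀ (ne_of_gt hcard), one_smul, sub_self]
  have he_multi : ∀ t k, e (t + k) = ∑ g : G, compWeights s t k g • ρ g (e t) := by
    intro t k
    induction k with
    | zero => simp [compWeights, ite_smul]
    | succ k ih =>
      calc e (t + (k + 1)) = e ((t + k) + 1) := by ring_nf
        _ = ∑ h : G, s (t + k) h • ρ h (e (t + k)) := he_step _
        _ = ∑ h : G, ∑ g : G, (s (t + k) h * compWeights s t k g) • ρ (h * g) (e t) := by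
            refine Finset.sum_congr rfl fun h _ => ?_
            rw [ih, map_sum, Finset.smul_sum]
            refine Finset.sum_congr rfl fun g _ => ?_
            rw [map_smul, smul_smul, rho_mul_apply]
        _ = ∑ h : G, ∑ g : G, (s (t + k) h * compWeights s t k (h⁻¹ * g)) • ρ g (e t) := by
            refine Finset.sum_congr rfl fun h _ => ?_
            refine Fintype.sum_equiv (Equiv.mulLeft h) _ _ fun g => ?_
            simp [inv_mul_cancel_left]
        _ = ∑ g : G, compWeights s t (k + 1) g • ρ g (e t) := by
            rw [Finset.sum_comm]
            refine Finset.sum_congr rfl fun g _ => ?_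
            show _ = groupConv (s (t + k)) (compWeights s t k) g • ρ g (e t)
            rw [groupConv, Finset.sum_smul]
  have hnu_step : ∀ t, nu ρ (e (t + 1)) ≤ nu ρ (e t) := by
    intro t
    calc nu ρ (e (t + 1)) = nu ρ (∑ g : G, s t g • ρ g (e t)) := by rw [he_step]
      _ ≤ ∑ g : G, s t g * nu ρ (ρ g (e t)) := nu_sum_smul_le ρ _ (hs t).1 _
      _ = nu ρ (e t) := by
          simp only [nu_rho]
          rw [← Finset.sum_mul, (hs t).2, one_mul]
  have hnu_mono : ∀ t k, nu ρ (e (t + k)) ≤ nu ρ (e t) := by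
    intro t k
    induction k with
    | zero => exact le_refl _
    | succ k ih => exact le_trans (hnu_step (t + k)) ih
  have hnu_T : ∀ t, nu ρ (e (t + T)) ≤ r * nu ρ (e t) := by
    intro t
    rw [he_multi t T]
    exact key_contraction ρ _ (compWeights_convex s hs t T).2 δ
      (fun g => (hq t g).le) _ (he_ker t)
  have hnu_pow : ∀ k, nu ρ (e (k * T)) ≤ r ^ k * nu ρ (e 0) := by
    intro k
    induction k with
    | zero => simp
    | succ k ih =>
      have h1 : (k + 1) * T = k * T + T := by ring
      calc nu ρ (e ((k + 1) * T)) = nu ρ (e (k * T + T)) := by rw [h1]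
        _ ≤ r * nu ρ (e (k * T)) := hnu_T _
        _ ≤ r * (r ^ k * nu ρ (e 0)) := mul_le_mul_of_nonneg_left ih hr0
        _ = r ^ (k + 1) * nu ρ (e 0) := by ring
  have hbound : ∀ t, ‖e t‖ ≤ nu ρ (e 0) * r ^ (t / T) := by
    intro t
    have h1 : t = (t / T) * T + t % T := by
      rw [mul_comm]; exact (Nat.div_add_mod t T).symm
    calc ‖e t‖ ≤ nu ρ (e t) := norm_le_nu ρ _
      _ = nu ρ (e ((t / T) * T + t % T)) := by rw [← h1]
      _ ≤ nu ρ (e ((t / T) * T)) := hnu_mono _ _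
      _ ≤ r ^ (t / T) * nu ρ (e 0) := hnu_pow _
      _ = nu ρ (e 0) * r ^ (t / T) := mul_comm _ _
  have hdiv : Filter.Tendsto (fun t : ℕ => t / T) Filter.atTop Filter.atTop :=
    Filter.tendsto_atTop_atTop.2 fun b =>
      ⟨b * T, fun t ht => (Nat.le_div_iff_mul_le hT).2 ht⟩
  have hpow : Filter.Tendsto (fun t : ℕ => nu ρ (e 0) * r ^ (t / T))
      Filter.atTop (nhds 0) := by
    have h := ((tendsto_pow_atTop_nhds_zero_of_lt_one hr0 hr1).comp hdiv).const_mul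
      (nu ρ (e 0))
    simpa using h
  have htend : Filter.Tendsto x Filter.atTop (nhds Fb) := by
    rw [tendsto_iff_norm_sub_tendsto_zero]
    exact squeeze_zero (fun t => norm_nonneg _) hbound hpow
  exact ⟨htend, nu ρ (e 0), nu_nonneg ρ _, hbound⟩
end

section
/- Let G be a finite group, T a positive integer, 0 < δ ≤ 1/|G|, and ε > 0. Let (Ω, 𝔉, P) be a probability space and let s(t) : Ω → ℝ^G, t = 0,1,2,..., be mutually independent random variables each of whose values is a vector of convex weights on G. Define the random sequence p(t) by p(0) equal to the indicator of the identity element (p(0)(e) = 1, p(0)(g) = 0 for g ≠ e) and p(t+1)(ω) = s(t)(ω) ∗ p(t)(ω). Suppose that for every t, P({ω : the composite weights q(t,T)(ω) = s(t+T−1)(ω) ∗ ⋯ ∗ s(t)(ω) satisfy q(t,T)(ω)(g) > δ for all g ∈ G}) ≥ ε. Then for every γ > 0, lim_{t→∞} P({ω : ‖p(t)(ω) − p̂‖ < γ}) = 1, where p̂(g) = 1/|G| and ‖·‖ is the Euclidean norm on ℝ^G. -/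
open Finset MeasureTheory

namespace ConvAux

variable {G : Type*} [Group G] [Fintype G] [DecidableEq G]

noncomputable def vmax (v : G → ℝ) : ℝ := univ.sup' univ_nonempty v
noncomputable def vmin (v : G → ℝ) : ℝ := univ.inf' univ_nonempty v

lemma vmin_le_vmax (v : G → ℝ) : vmin v ≤ vmax v := by
  obtain ⟨g⟩ := (inferInstance : Nonempty G)
  exact le_trans (inf'_le _ (mem_univ g)) (le_sup' _ (mem_univ g))

lemma sum_conj (v : G → ℝ) (h : G) : ∑ g, v (h⁻¹ * g) = ∑ g, v g :=
  Fintype.sum_equiv (Equiv.mulLeft h⁻¹) _ _ (fun g => rfl)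

lemma sum_groupConv (q v : G → ℝ) (hq : ∑ g, q g = 1) :
    ∑ g, groupConv q v g = ∑ g, v g := by
  unfold groupConv
  rw [Finset.sum_comm]
  calc ∑ h : G, ∑ g : G, q h * v (h⁻¹ * g)
      = ∑ h : G, q h * ∑ g, v g := by
        refine Finset.sum_congr rfl fun h _ => ?_
        rw [← Finset.mul_sum, sum_conj]
    _ = ∑ g, v g := by rw [← Finset.sum_mul, hq, one_mul]

lemma groupConv_isConvex {q v : G → ℝ} (hq : IsConvexWeights q) (hv : IsConvexWeights v) :
    IsConvexWeights (groupConv q v) := by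
  refine ⟨fun g => Finset.sum_nonneg fun h _ => mul_nonneg (hq.1 h) (hv.1 _), ?_⟩
  rw [sum_groupConv _ _ hq.2, hv.2]

lemma compWeights_isConvex (s : ℕ → G → ℝ) (hs : ∀ n, IsConvexWeights (s n)) (t : ℕ) :
    ∀ T, IsConvexWeights (compWeights s t T)
  | 0 => by
      constructor
      · intro g; dsimp [compWeights]; split <;> norm_num
      · simp [compWeights]
  | T + 1 => groupConv_isConvex (hs _) (compWeights_isConvex s hs t T)

lemma groupConv_assoc (a b c : G → ℝ) :
    groupConv (groupConv a b) c = groupConv a (groupConv b c) := by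
  funext g
  unfold groupConv
  simp only [Finset.sum_mul, Finset.mul_sum]
  rw [Finset.sum_comm]
  refine Finset.sum_congr rfl fun h _ => ?_
  rw [← Equiv.sum_comp (Equiv.mulLeft h) (fun k => a h * b (h⁻¹ * k) * c (k⁻¹ * g))]
  refine Finset.sum_congr rfl fun k _ => ?_
  simp [Equiv.mulLeft, mul_assoc, mul_inv_rev]

lemma groupConv_delta (v : G → ℝ) :
    groupConv (fun g => if g = 1 then (1:ℝ) else 0) v = v := by
  funext g
  unfold groupConv
  rw [Finset.sum_eq_single 1]
  · simp
  · intro h _ hh; simp [hh]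
  · simp

/-- `p (t+T) = compWeights s t T ∗ p t`. -/
lemma comp_apply (s : ℕ → G → ℝ) (p : ℕ → G → ℝ)
    (hstep : ∀ t, p (t + 1) = groupConv (s t) (p t)) (t : ℕ) :
    ∀ T, p (t + T) = groupConv (compWeights s t T) (p t)
  | 0 => by simp [compWeights, groupConv_delta]
  | T + 1 => by
      rw [show t + (T+1) = (t + T) + 1 from rfl, hstep, comp_apply s p hstep t T,
        ← groupConv_assoc]
      rfl

lemma conv_le_vmax {q : G → ℝ} (hq : IsConvexWeights q) (v : G → ℝ) (g : G) :
    groupConv q v g ≤ vmax v := by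
  calc groupConv q v g ≤ ∑ h : G, q h * vmax v := by
        refine Finset.sum_le_sum fun h _ => ?_
        exact mul_le_mul_of_nonneg_left (le_sup' _ (mem_univ _)) (hq.1 h)
    _ = vmax v := by rw [← Finset.sum_mul, hq.2, one_mul]

lemma vmin_le_conv {q : G → ℝ} (hq : IsConvexWeights q) (v : G → ℝ) (g : G) :
    vmin v ≤ groupConv q v g := by
  calc vmin v = ∑ h : G, q h * vmin v := by rw [← Finset.sum_mul, hq.2, one_mul]
    _ ≤ groupConv q v g := by
        refine Finset.sum_le_sum fun h _ => ?_
        exact mul_le_mul_of_nonneg_left (inf'_le _ (mem_univ _)) (hq.1 h)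

lemma gap_conv_le {q : G → ℝ} (hq : IsConvexWeights q) (v : G → ℝ) :
    vmax (groupConv q v) - vmin (groupConv q v) ≤ vmax v - vmin v := by
  have h1 : vmax (groupConv q v) ≤ vmax v := sup'_le _ _ fun g _ => conv_le_vmax hq v g
  have h2 : vmin v ≤ vmin (groupConv q v) := le_inf' _ _ fun g _ => vmin_le_conv hq v g
  linarith

/-- the contraction estimate -/
lemma gap_conv_contract {δ : ℝ} (hδ : 0 < δ) {q : G → ℝ} (hq : ∑ g, q g = 1)
    (hqδ : ∀ g, δ ≤ q g) (v : G → ℝ) :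
    vmax (groupConv q v) - vmin (groupConv q v) ≤ (1 - 2*δ) * (vmax v - vmin v) := by
  have hgap : 0 ≤ vmax v - vmin v := sub_nonneg.2 (vmin_le_vmax v)
  have hup : ∀ g, groupConv q v g ≤ vmax v - δ * (vmax v - vmin v) := by
    intro g
    obtain ⟨a, -, ha⟩ := Finset.exists_mem_eq_inf' (univ_nonempty) v
    set h0 : G := g * a⁻¹ with hh0
    have hinv : h0⁻¹ * g = a := by simp [hh0, mul_assoc]
    have heq : groupConv q v g = q h0 * v a + ∑ h ∈ univ.erase h0, q h * v (h⁻¹ * g) := by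
      unfold groupConv
      rw [← Finset.add_sum_erase _ _ (mem_univ h0), hinv]
    rw [heq]
    have hsum : ∑ h ∈ univ.erase h0, q h * v (h⁻¹ * g)
        ≤ ∑ h ∈ univ.erase h0, q h * vmax v := by
      refine Finset.sum_le_sum fun h hh => ?_
      have h0le : 0 ≤ q h := le_trans hδ.le (hqδ h)
      exact mul_le_mul_of_nonneg_left (le_sup' _ (mem_univ _)) h0le
    have hq' : ∑ h ∈ univ.erase h0, q h = 1 - q h0 := by
      have := Finset.add_sum_erase univ q (mem_univ h0)
      rw [hq] at this; linarith
    have hsm : ∑ h ∈ univ.erase h0, q h * vmax v = (1 - q h0) * vmax v := by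
      rw [← Finset.sum_mul, hq']
    have hva : v a = vmin v := ha.symm
    have hq0 : δ ≤ q h0 := hqδ h0
    rw [hva]
    rw [hsm] at hsum
    nlinarith [hsum, hq0, hgap]
  have hlo : ∀ g, vmin v + δ * (vmax v - vmin v) ≤ groupConv q v g := by
    intro g
    obtain ⟨a, -, ha⟩ := Finset.exists_mem_eq_sup' (univ_nonempty) v
    set h0 : G := g * a⁻¹ with hh0
    have hinv : h0⁻¹ * g = a := by simp [hh0, mul_assoc]
    have heq : groupConv q v g = q h0 * v a + ∑ h ∈ univ.erase h0, q h * v (h⁻¹ * g) := by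
      unfold groupConv
      rw [← Finset.add_sum_erase _ _ (mem_univ h0), hinv]
    have hsum : ∑ h ∈ univ.erase h0, q h * vmin v
        ≤ ∑ h ∈ univ.erase h0, q h * v (h⁻¹ * g) := by
      refine Finset.sum_le_sum fun h hh => ?_
      have h0le : 0 ≤ q h := le_trans hδ.le (hqδ h)
      exact mul_le_mul_of_nonneg_left (inf'_le _ (mem_univ _)) h0le
    have hq' : ∑ h ∈ univ.erase h0, q h = 1 - q h0 := by
      have := Finset.add_sum_erase univ q (mem_univ h0)
      rw [hq] at this; linarith
    have hsm : ∑ h ∈ univ.erase h0, q h * vmin v = (1 - q h0) * vmin v := by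
      rw [← Finset.sum_mul, hq']
    have hva : v a = vmax v := ha.symm
    have hq0 : δ ≤ q h0 := hqδ h0
    rw [heq, hva]
    rw [hsm] at hsum
    nlinarith [hsum, hq0, hgap]
  have h1 : vmax (groupConv q v) ≤ vmax v - δ * (vmax v - vmin v) :=
    sup'_le _ _ fun g _ => hup g
  have h2 : vmin v + δ * (vmax v - vmin v) ≤ vmin (groupConv q v) :=
    le_inf' _ _ fun g _ => hlo g
  nlinarith

lemma gap_le_one {v : G → ℝ} (hv : IsConvexWeights v) : vmax v - vmin v ≤ 1 := by
  obtain ⟨a, -, ha⟩ := Finset.exists_mem_eq_sup' (univ_nonempty (α := G)) v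
  have h1 : vmax v ≤ 1 := by
    rw [vmax, ha, ← hv.2]
    exact Finset.single_le_sum (fun g _ => hv.1 g) (mem_univ a)
  obtain ⟨b⟩ := (inferInstance : Nonempty G)
  have h2 : 0 ≤ vmin v := le_inf' _ _ fun g _ => hv.1 g
  linarith

lemma vmin_le_inv_card {v : G → ℝ} (hv : IsConvexWeights v) :
    vmin v ≤ 1 / (Fintype.card G : ℝ) ∧ 1 / (Fintype.card G : ℝ) ≤ vmax v := by
  have hcard : 0 < (Fintype.card G : ℝ) := by exact_mod_cast Fintype.card_pos
  have h1 : (Fintype.card G : ℝ) * vmin v ≤ 1 := by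
    rw [← hv.2]
    calc (Fintype.card G : ℝ) * vmin v = ∑ _g : G, vmin v := by
          simp [Finset.sum_const, Finset.card_univ, mul_comm]
      _ ≤ ∑ g, v g := Finset.sum_le_sum fun g _ => inf'_le _ (mem_univ g)
  have h2 : 1 ≤ (Fintype.card G : ℝ) * vmax v := by
    rw [← hv.2]
    calc ∑ g, v g ≤ ∑ _g : G, vmax v := Finset.sum_le_sum fun g _ => le_sup' _ (mem_univ g)
      _ = (Fintype.card G : ℝ) * vmax v := by
          simp [Finset.sum_const, Finset.card_univ, mul_comm]
  constructor
  · rw [le_div_iff₀ hcard]; linarith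
  · rw [div_le_iff₀ hcard]; linarith

lemma dist_le_gap {v : G → ℝ} (hv : IsConvexWeights v) (g : G) :
    |v g - 1 / (Fintype.card G : ℝ)| ≤ vmax v - vmin v := by
  obtain ⟨h1, h2⟩ := vmin_le_inv_card hv
  have h3 : vmin v ≤ v g := inf'_le _ (mem_univ g)
  have h4 : v g ≤ vmax v := le_sup' _ (mem_univ g)
  rw [abs_le]
  constructor <;> linarith



lemma compWeights_measurable {Ω : Type*} {m' : MeasurableSpace Ω}
    (f : ℕ → Ω → G → ℝ) (t : ℕ) :
    ∀ (T' : ℕ), (∀ i, t ≤ i → i < t + T' → ∀ g, Measurable[m'] (fun ω => f i ω g)) →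
      ∀ g, Measurable[m'] (fun ω => compWeights (fun n => f n ω) t T' g)
  | 0, _, g => by
      simp only [compWeights]
      exact measurable_const
  | T' + 1, h, g => by
      have : (fun ω => compWeights (fun n => f n ω) t (T' + 1) g)
          = fun ω => ∑ h2 : G, f (t + T') ω h2 *
              compWeights (fun n => f n ω) t T' (h2⁻¹ * g) := rfl
      rw [this]
      refine Finset.measurable_sum _ fun h2 _ => Measurable.mul ?_ ?_
      · exact h (t + T') (Nat.le_add_right _ _) (by omega) h2
      · exact compWeights_measurable f t T'
          (fun i hi hi' g' => h i hi (by omega) g') _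

end ConvAux

open MeasureTheory ProbabilityTheory Finset ConvAux

theorem randomized_convergence_in_probability
    {G : Type*} [Group G] [Fintype G] [DecidableEq G]
    {Ω : Type*} [MeasurableSpace Ω] (P : MeasureTheory.Measure Ω)
    [MeasureTheory.IsProbabilityMeasure P]
    (T : ℕ) (hT : 0 < T)
    (δ : ℝ) (hδ0 : 0 < δ) (hδ1 : δ ≤ 1 / (Fintype.card G : ℝ))
    (ε : ℝ) (hε : 0 < ε)
    (s : ℕ → Ω → G → ℝ)
    (hmeas : ∀ t, Measurable (s t))
    (hindep : ProbabilityTheory.iIndepFun s P)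
    (hconv : ∀ (t : ℕ) (ω : Ω), IsConvexWeights (s t ω))
    (p : ℕ → Ω → G → ℝ)
    (hp0 : ∀ ω : Ω, p 0 ω = fun g => if g = 1 then 1 else 0)
    (hstep : ∀ (t : ℕ) (ω : Ω), p (t + 1) ω = groupConv (s t ω) (p t ω))
    (hq : ∀ t : ℕ, ENNReal.ofReal ε
        ≤ P {ω : Ω | ∀ g : G, δ < compWeights (fun n => s n ω) t T g}) :
    ∀ γ : ℝ, 0 < γ →
      Filter.Tendsto
        (fun t => P {ω : Ω |
          Real.sqrt (∑ g : G, (p t ω g - 1 / (Fintype.card G : ℝ)) ^ 2) < γ})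
        Filter.atTop (nhds 1) := by
  classical
  intro γ hγ
  have hnpos : (0:ℝ) < (Fintype.card G : ℝ) := by exact_mod_cast Fintype.card_pos
  -- p t ω is a vector of convex weights
  have hpconv : ∀ t ω, IsConvexWeights (p t ω) := by
    intro t
    induction t with
    | zero =>
        intro ω; rw [hp0]
        exact ⟨fun g => by dsimp only; split <;> norm_num, by simp⟩
    | succ t ih =>
        intro ω; rw [hstep]; exact groupConv_isConvex (hconv t ω) (ih ω)
  have hpmeas : ∀ t g, Measurable (fun ω => p t ω g) := by
    intro t
    induction t with
    | zero =>
        intro g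
        have : (fun ω => p 0 ω g) = fun _ => if g = 1 then (1:ℝ) else 0 :=
          funext fun ω => by rw [hp0]
        rw [this]; exact measurable_const
    | succ t ih =>
        intro g
        have : (fun ω => p (t+1) ω g) = fun ω => ∑ h : G, s t ω h * p t ω (h⁻¹ * g) :=
          funext fun ω => by rw [hstep]; rfl
        rw [this]
        exact Finset.measurable_sum _ fun h _ =>
          ((measurable_pi_apply h).comp (hmeas t)).mul (ih _)
  -- the gap process
  set gap : ℕ → Ω → ℝ := fun t ω => vmax (p t ω) - vmin (p t ω) with hgapdef
  have hgap0 : ∀ t ω, 0 ≤ gap t ω := fun t ω => sub_nonneg.2 (vmin_le_vmax _)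
  have hgapstep : ∀ t ω, gap (t+1) ω ≤ gap t ω := by
    intro t ω
    have : gap (t+1) ω = vmax (groupConv (s t ω) (p t ω)) -
        vmin (groupConv (s t ω) (p t ω)) := by rw [hgapdef]; simp only; rw [hstep]
    rw [this]
    exact gap_conv_le (hconv t ω) _
  have hgapmono : ∀ ω ⦃t t' : ℕ⦄, t ≤ t' → gap t' ω ≤ gap t ω := by
    intro ω t t' h
    induction t', h using Nat.le_induction with
    | base => exact le_rfl
    | succ t' ht' ih => exact le_trans (hgapstep t' ω) ih
  -- contraction constant
  set lam : ℝ := max (1 - 2*δ) 0 with hlamdef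
  have hlam0 : 0 ≤ lam := le_max_right _ _
  have hlam1 : lam < 1 := by
    rw [hlamdef, max_lt_iff]; constructor <;> linarith
  -- good blocks
  set good : ℕ → Ω → Prop := fun k ω => ∀ g, δ < compWeights (fun n => s n ω) (k*T) T g
    with hgooddef
  -- contraction along good blocks
  have hcount : ∀ ω M,
      gap (M*T) ω ≤ lam ^ ((Finset.range M).filter (fun k => good k ω)).card := by
    intro ω M
    induction M with
    | zero =>
        simp only [Finset.range_zero, Finset.filter_empty, Finset.card_empty, pow_zero]
        exact gap_le_one (hpconv _ ω)
    | succ M ih =>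
      have hMT : (M+1)*T = M*T + T := Nat.succ_mul M T
      have hcomp := comp_apply (fun n => s n ω) (fun t => p t ω)
        (fun t => hstep t ω) (M*T) T
      set q := compWeights (fun n => s n ω) (M*T) T with hqdef
      have hqc : IsConvexWeights q :=
        compWeights_isConvex _ (fun n => hconv n ω) _ _
      have hgapval : gap ((M+1)*T) ω =
          vmax (groupConv q (p (M*T) ω)) - vmin (groupConv q (p (M*T) ω)) := by
        rw [hgapdef]; simp only; rw [hMT, hcomp]
      rw [Finset.range_add_one, Finset.filter_insert]
      by_cases hg : good M ω
      · rw [if_pos hg, Finset.card_insert_of_notMem (by simp)]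
        have hcon := gap_conv_contract hδ0 hqc.2 (fun g => (hg g).le) (p (M*T) ω)
        have h1 : gap ((M+1)*T) ω ≤ (1 - 2*δ) * gap (M*T) ω := by
          rw [hgapval]; exact hcon
        have h2 : (1 - 2*δ) * gap (M*T) ω ≤ lam * gap (M*T) ω :=
          mul_le_mul_of_nonneg_right (le_max_left _ _) (hgap0 _ _)
        calc gap ((M+1)*T) ω ≤ lam * gap (M*T) ω := le_trans h1 h2
          _ ≤ lam * lam ^ ((Finset.range M).filter (fun k => good k ω)).card :=
              mul_le_mul_of_nonneg_left ih hlam0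
          _ = lam ^ (((Finset.range M).filter (fun k => good k ω)).card + 1) := by
              rw [pow_succ]; ring
      · rw [if_neg hg]
        have h1 : gap ((M+1)*T) ω ≤ gap (M*T) ω := by
          rw [hgapval]; exact gap_conv_le hqc _
        exact le_trans h1 ih
  -- the events
  set A : ℕ → Set Ω := fun k => {ω | good k ω} with hAdef
  have hAq : ∀ k, ENNReal.ofReal ε ≤ P (A k) := fun k => hq (k*T)
  have hscoord : ∀ i g, Measurable (fun ω => s i ω g) :=
    fun i g => (measurable_pi_apply g).comp (hmeas i)
  have hAmeas : ∀ k, MeasurableSet (A k) := by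
    intro k
    have hEq : A k = ⋂ g : G, {ω | δ < compWeights (fun n => s n ω) (k*T) T g} := by
      ext ω; simp [hAdef, hgooddef, Set.mem_iInter]
    rw [hEq]
    exact MeasurableSet.iInter fun g => measurableSet_lt measurable_const
      (compWeights_measurable s (k*T) T (fun i _ _ g => hscoord i g) g)
  -- measurability of A k with respect to block σ-algebras
  have hAmeasSup : ∀ (k : ℕ) (S : Set ℕ), (∀ i, k*T ≤ i → i < k*T + T → i ∈ S) →
      MeasurableSet[⨆ i ∈ S, MeasurableSpace.comap (s i) inferInstance] (A k) := by
    intro k S hS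
    have hmm : ∀ i, k*T ≤ i → i < k*T + T → ∀ g,
        Measurable[⨆ i ∈ S, MeasurableSpace.comap (s i) inferInstance]
          (fun ω => s i ω g) := by
      intro i hi hi' g
      have h1 : Measurable[MeasurableSpace.comap (s i) inferInstance] (s i) :=
        comap_measurable _
      have h2 : Measurable[MeasurableSpace.comap (s i) inferInstance]
          (fun ω => s i ω g) := (measurable_pi_apply g).comp h1
      exact h2.mono
        (le_iSup₂ (f := fun i (_ : i ∈ S) =>
          MeasurableSpace.comap (s i) inferInstance) i (hS i hi hi')) le_rfl
    have hEq : A k = ⋂ g : G, {ω | δ < compWeights (fun n => s n ω) (k*T) T g} := by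
      ext ω; simp [hAdef, hgooddef, Set.mem_iInter]
    rw [hEq]
    exact MeasurableSet.iInter fun g => measurableSet_lt measurable_const
      (compWeights_measurable s (k*T) T hmm g)
  -- independence bound on blocks of consecutive failures
  have hiInd : ProbabilityTheory.iIndep
      (fun i => MeasurableSpace.comap (s i) inferInstance) P :=
    (ProbabilityTheory.iIndepFun_iff_iIndep _ _ _).1 hindep
  have hle : ∀ i, MeasurableSpace.comap (s i) inferInstance ≤ ‹MeasurableSpace Ω› :=
    fun i => (hmeas i).comap_le
  have hblock : ∀ b m : ℕ, P (⋂ i ∈ Set.Iio m, (A (b+i))ᶜ) ≤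
      (1 - ENNReal.ofReal ε)^m := by
    intro b m
    induction m with
    | zero => simp
    | succ m ih =>
      have hsplit : (⋂ i ∈ Set.Iio (m+1), (A (b+i))ᶜ)
          = (⋂ i ∈ Set.Iio m, (A (b+i))ᶜ) ∩ (A (b+m))ᶜ := by
        ext ω
        simp only [Set.mem_iInter, Set.mem_inter_iff, Set.mem_Iio]
        constructor
        · intro h; exact ⟨fun i hi => h i (by omega), h m (by omega)⟩
        · rintro ⟨h1, h2⟩ i hi
          rcases Nat.lt_succ_iff_lt_or_eq.1 hi with h | rfl
          · exact h1 i h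
          · exact h2
      rw [hsplit]
      have hdisj : Disjoint (Set.Iio ((b+m)*T)) (Set.Ici ((b+m)*T)) :=
        Set.Iio_disjoint_Ici le_rfl
      have hindep2 := ProbabilityTheory.indep_iSup_of_disjoint hle hiInd hdisj
      have hC : MeasurableSet[⨆ i ∈ Set.Iio ((b+m)*T),
          MeasurableSpace.comap (s i) inferInstance]
          (⋂ i ∈ Set.Iio m, (A (b+i))ᶜ) := by
        refine MeasurableSet.biInter (Set.to_countable _) fun i hi => ?_
        have him : i < m := hi
        refine (hAmeasSup (b+i) _ fun j hj hj' => ?_).compl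
        have : (b+i)*T + T = (b+i+1)*T := (Nat.succ_mul (b+i) T).symm
        have hle2 : (b+i+1)*T ≤ (b+m)*T :=
          Nat.mul_le_mul_right T (by omega)
        simp only [Set.mem_Iio]; omega
      have hD : MeasurableSet[⨆ i ∈ Set.Ici ((b+m)*T),
          MeasurableSpace.comap (s i) inferInstance] (A (b+m))ᶜ := by
        refine (hAmeasSup (b+m) _ fun j hj hj' => ?_).compl
        simpa using hj
      have hmul := (ProbabilityTheory.Indep_iff _ _ _).1 hindep2 _ _ hC hD
      rw [hmul]
      have hPD : P (A (b+m))ᶜ ≤ 1 - ENNReal.ofReal ε := by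
        rw [prob_compl_eq_one_sub (hAmeas _)]
        exact tsub_le_tsub_left (hAq _) 1
      calc P (⋂ i ∈ Set.Iio m, (A (b+i))ᶜ) * P (A (b+m))ᶜ
          ≤ (1 - ENNReal.ofReal ε)^m * (1 - ENNReal.ofReal ε) := mul_le_mul' ih hPD
        _ = (1 - ENNReal.ofReal ε)^(m+1) := (pow_succ _ _).symm
  -- the decreasing bad events
  set η : ℝ := γ / Real.sqrt (Fintype.card G : ℝ) with hηdef
  have hηpos : 0 < η := div_pos hγ (Real.sqrt_pos.2 hnpos)
  set F : ℕ → Set Ω := fun t => {ω | η ≤ gap t ω} with hFdef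
  have hFmeas : ∀ t, MeasurableSet (F t) := by
    intro t
    have hEq : F t = ⋃ g : G, ⋃ h : G, {ω | η ≤ p t ω g - p t ω h} := by
      ext ω
      simp only [hFdef, Set.mem_setOf_eq, Set.mem_iUnion]
      constructor
      · intro hωη
        obtain ⟨a, -, ha⟩ := Finset.exists_mem_eq_sup' (univ_nonempty (α := G)) (p t ω)
        obtain ⟨b, -, hb⟩ := Finset.exists_mem_eq_inf' (univ_nonempty (α := G)) (p t ω)
        exact ⟨a, b, by rw [hgapdef] at hωη; simp only at hωη
                        rw [vmax, vmin, ha, hb] at hωη; exact hωη⟩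
      · rintro ⟨g, h, hgh⟩
        have h1 : p t ω g ≤ vmax (p t ω) := Finset.le_sup' _ (Finset.mem_univ g)
        have h2 : vmin (p t ω) ≤ p t ω h := Finset.inf'_le _ (Finset.mem_univ h)
        rw [hgapdef]; simp only; linarith
    rw [hEq]
    exact MeasurableSet.iUnion fun g => MeasurableSet.iUnion fun h =>
      measurableSet_le measurable_const ((hpmeas t g).sub (hpmeas t h))
  have hFanti : Antitone F := by
    intro t t' h ω hω
    exact le_trans hω.out (hgapmono ω h)
  -- the intersection of the bad events is null
  obtain ⟨N, hN⟩ : ∃ N : ℕ, lam ^ N < η := exists_pow_lt_of_lt_one hηpos hlam1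
  have hinterF : P (⋂ t, F t) = 0 := by
    have hbound : ∀ m : ℕ, 1 ≤ m →
        P (⋂ t, F t) ≤ (N : ENNReal) * (1 - ENNReal.ofReal ε)^m := by
      intro m hm
      have hsub : (⋂ t, F t) ⊆ ⋃ j ∈ Set.Iio N, ⋂ i ∈ Set.Iio m, (A (j*m+i))ᶜ := by
        intro ω hω
        by_contra hcon
        simp only [Set.mem_iUnion, Set.mem_iInter, Set.mem_compl_iff, Set.mem_Iio,
          not_exists, not_forall] at hcon
        -- for every j < N there is i < m with ω ∈ A (j*m+i)
        have hgood : ∀ j, j < N → ∃ i, i < m ∧ good (j*m+i) ω := by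
          intro j hj
          obtain ⟨i, hi, hAi⟩ := hcon j hj
          exact ⟨i, hi, not_not.1 hAi⟩
        -- build an injection from range N into the good blocks
        choose f hf1 hf2 using hgood
        have hm0 : 0 < m := hm
        have key : ∀ (j i : ℕ), i < m → (j*m + i)/m = j := by
          intro j i hi
          rw [mul_comm, add_comm, Nat.add_mul_div_left _ _ hm0,
            Nat.div_eq_of_lt hi, Nat.zero_add]
        have hinj : ∀ j1 (h1 : j1 < N) j2 (h2 : j2 < N),
            j1*m + f j1 h1 = j2*m + f j2 h2 → j1 = j2 := by
          intro j1 h1 j2 h2 heq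
          rw [← key j1 _ (hf1 j1 h1), heq, key j2 _ (hf1 j2 h2)]
        have hcard : N ≤ ((Finset.range (N*m)).filter (fun k => good k ω)).card := by
          have : (Finset.range N).image (fun j => if h : j < N then j*m + f j h else 0)
              ⊆ (Finset.range (N*m)).filter (fun k => good k ω) := by
            intro x hx
            simp only [Finset.mem_image, Finset.mem_range] at hx
            obtain ⟨j, hj, rfl⟩ := hx
            rw [dif_pos hj]
            simp only [Finset.mem_filter, Finset.mem_range]
            refine ⟨?_, hf2 j hj⟩
            calc j*m + f j hj < j*m + m := by exact Nat.add_lt_add_left (hf1 j hj) _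
              _ = (j+1)*m := (Nat.succ_mul j m).symm
              _ ≤ N*m := Nat.mul_le_mul_right m hj
          calc N = (Finset.range N).card := (Finset.card_range N).symm
            _ = ((Finset.range N).image
                  (fun j => if h : j < N then j*m + f j h else 0)).card := by
                rw [Finset.card_image_of_injOn]
                intro j1 hj1 j2 hj2 heq
                simp only [Finset.mem_coe, Finset.mem_range] at hj1 hj2
                dsimp only at heq
                rw [dif_pos hj1, dif_pos hj2] at heq
                exact hinj j1 hj1 j2 hj2 heq
            _ ≤ _ := Finset.card_le_card this
        have hgapbound := hcount ω (N*m)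
        have hpow : lam ^ ((Finset.range (N*m)).filter (fun k => good k ω)).card
            ≤ lam ^ N := pow_le_pow_of_le_one hlam0 hlam1.le hcard
        have hωF := Set.mem_iInter.1 hω ((N*m)*T)
        have : η ≤ gap ((N*m)*T) ω := hωF
        linarith
      have hsub2 : (⋃ j ∈ Set.Iio N, ⋂ i ∈ Set.Iio m, (A (j*m+i))ᶜ)
          = ⋃ j ∈ Finset.range N, ⋂ i ∈ Set.Iio m, (A (j*m+i))ᶜ := by
        ext ω; simp [Set.mem_iUnion, Finset.mem_range]
      calc P (⋂ t, F t) ≤ P (⋃ j ∈ Finset.range N, ⋂ i ∈ Set.Iio m, (A (j*m+i))ᶜ) := by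
            rw [← hsub2]; exact measure_mono hsub
        _ ≤ ∑ j ∈ Finset.range N, P (⋂ i ∈ Set.Iio m, (A (j*m+i))ᶜ) :=
            measure_biUnion_finset_le _ _
        _ ≤ ∑ _j ∈ Finset.range N, (1 - ENNReal.ofReal ε)^m :=
            Finset.sum_le_sum fun j _ => hblock _ m
        _ = (N : ENNReal) * (1 - ENNReal.ofReal ε)^m := by
            simp [Finset.sum_const, Finset.card_range, nsmul_eq_mul]
    -- take the limit in m
    have hlt1 : (1 - ENNReal.ofReal ε) < 1 :=
      ENNReal.sub_lt_self ENNReal.one_ne_top one_ne_zero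
        (by simpa using (ENNReal.ofReal_pos.2 hε).ne')
    have htend : Filter.Tendsto (fun m => (N : ENNReal) * (1 - ENNReal.ofReal ε)^m)
        Filter.atTop (nhds 0) := by
      have := ENNReal.Tendsto.const_mul
        (ENNReal.tendsto_pow_atTop_nhds_zero_of_lt_one hlt1)
        (Or.inr (ENNReal.natCast_ne_top N))
      simpa using this
    have : P (⋂ t, F t) ≤ 0 :=
      ge_of_tendsto htend (Filter.eventually_atTop.2 ⟨1, fun m hm => hbound m hm⟩)
    exact le_antisymm this zero_le
  -- measure of bad events tends to zero
  have htendF : Filter.Tendsto (fun t => P (F t)) Filter.atTop (nhds 0) := by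
    have := MeasureTheory.tendsto_measure_iInter_atTop
      (fun t => (hFmeas t).nullMeasurableSet) hFanti ⟨0, measure_ne_top P _⟩
    rw [hinterF] at this
    exact this
  -- conclusion
  set W : ℕ → Set Ω := fun t => {ω : Ω |
    Real.sqrt (∑ g : G, (p t ω g - 1 / (Fintype.card G : ℝ)) ^ 2) < γ} with hWdef
  have hWmeas : ∀ t, MeasurableSet (W t) := by
    intro t
    refine measurableSet_lt ?_ measurable_const
    exact (Finset.measurable_sum _ fun g _ =>
      ((hpmeas t g).sub measurable_const).pow_const 2).sqrt
  have hWsub : ∀ t, (W t)ᶜ ⊆ F t := by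
    intro t ω hω
    simp only [hWdef, Set.mem_compl_iff, Set.mem_setOf_eq, not_lt] at hω
    have hb : ∀ g : G, (p t ω g - 1 / (Fintype.card G : ℝ))^2 ≤ (gap t ω)^2 := by
      intro g
      have h1 := dist_le_gap (hpconv t ω) g
      have h2 : |p t ω g - 1 / (Fintype.card G : ℝ)| ≤ gap t ω := h1
      calc (p t ω g - 1 / (Fintype.card G : ℝ))^2
          = |p t ω g - 1 / (Fintype.card G : ℝ)|^2 := (sq_abs _).symm
        _ ≤ (gap t ω)^2 := by
            exact pow_le_pow_left₀ (abs_nonneg _) h2 2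
    have hsum : ∑ g : G, (p t ω g - 1 / (Fintype.card G : ℝ))^2
        ≤ (Fintype.card G : ℝ) * (gap t ω)^2 := by
      calc ∑ g : G, (p t ω g - 1 / (Fintype.card G : ℝ))^2
          ≤ ∑ _g : G, (gap t ω)^2 := Finset.sum_le_sum fun g _ => hb g
        _ = (Fintype.card G : ℝ) * (gap t ω)^2 := by
            simp [Finset.sum_const, Finset.card_univ, mul_comm]
    have hsqrt : γ ≤ Real.sqrt ((Fintype.card G : ℝ) * (gap t ω)^2) :=
      le_trans hω (Real.sqrt_le_sqrt hsum)
    rw [Real.sqrt_mul (le_of_lt hnpos), Real.sqrt_sq (hgap0 t ω)] at hsqrt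
    show η ≤ gap t ω
    rw [hηdef, div_le_iff₀ (Real.sqrt_pos.2 hnpos)]
    linarith [mul_comm (Real.sqrt (Fintype.card G : ℝ)) (gap t ω)]
  have htendWc : Filter.Tendsto (fun t => P (W t)ᶜ) Filter.atTop (nhds 0) := by
    refine tendsto_of_tendsto_of_tendsto_of_le_of_le tendsto_const_nhds htendF
      (fun t => zero_le) (fun t => measure_mono (hWsub t))
  have hWc : ∀ t, P (W t) = 1 - P (W t)ᶜ := by
    intro t
    rw [← prob_compl_eq_one_sub (hWmeas t).compl, compl_compl]
  have : Filter.Tendsto (fun t => 1 - P (W t)ᶜ) Filter.atTop (nhds (1 - 0)) :=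
    ENNReal.Tendsto.sub tendsto_const_nhds htendWc (Or.inl ENNReal.one_ne_top)
  rw [show (1:ENNReal) - 0 = 1 by simp] at this
  exact this.congr fun t => (hWc t).symm
end
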